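/- Let o₁ = [l₁,u₁] and o₂ = [l₂,u₂] be two uncertain 1D objects with a common midpoint, i.e. (l₁+u₁)/2 = (l₂+u₂)/2, with o₂ strictly contained in o₁ (l₁ < l₂ and u₂ < u₁). Let x₁ = (l₁+l₂)/2 and x₂ = (u₁+u₂)/2. Then p(x₁) = p(x₂) = 1/2, and p(q) < 1/2 for every q with x₁ < q < x₂. In other words, x₁ and x₂ are probabilistic bisectors of o₁ and o₂, and strictly between them the smaller (contained) object is strictly the more probable nearest neighbor. -/

import Mathlib

open MeasureTheory
open scoped ENNReal

/-- The uniform probability measure on the closed interval `[a, b]`. -/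
noncomputable def unif (a b : ℝ) : Measure ℝ :=
  (volume (Set.Icc a b))⁻¹ • volume.restrict (Set.Icc a b)

/-- Probability that the uncertain object `[l₁,u₁]` is nearer to the query point `q`
than the uncertain object `[l₂,u₂]`. -/
noncomputable def nnProb (l₁ u₁ l₂ u₂ q : ℝ) : ℝ≥0∞ :=
  ((unif l₁ u₁).prod (unif l₂ u₂)) {xy : ℝ × ℝ | |xy.1 - q| < |xy.2 - q|}

lemma unif_prob (l u : ℝ) (h : l < u) : IsProbabilityMeasure (unif l u) := by
  constructor
  rw [unif, Measure.smul_apply, smul_eq_mul,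
    Measure.restrict_apply MeasurableSet.univ, Set.univ_inter, Real.volume_Icc]
  exact ENNReal.inv_mul_cancel (by simp only [ne_eq, ENNReal.ofReal_eq_zero, not_le]; linarith) ENNReal.ofReal_ne_top

noncomputable def lenf (l₁ u₁ q y : ℝ) : ℝ :=
  min (q + |y - q|) u₁ - max (q - |y - q|) l₁

lemma lenf_cont (l₁ u₁ q : ℝ) : Continuous (lenf l₁ u₁ q) := by
  unfold lenf; fun_prop

lemma lenf_nonneg (l₁ u₁ q y : ℝ) (hq : l₁ ≤ q) (hq' : q ≤ u₁) : 0 ≤ lenf l₁ u₁ q y := by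
  have h := abs_nonneg (y - q)
  unfold lenf
  have : max (q - |y - q|) l₁ ≤ min (q + |y - q|) u₁ :=
    max_le (le_min (by linarith) (by linarith)) (le_min (by linarith) (by linarith))
  linarith

lemma vol_Ioo_inter_Icc (a b c d : ℝ) :
    volume (Set.Ioo a b ∩ Set.Icc c d) = ENNReal.ofReal (min b d - max a c) := by
  apply le_antisymm
  · have hsub : Set.Ioo a b ∩ Set.Icc c d ⊆ Set.Icc (max a c) (min b d) := by
      rintro x ⟨hx1, hx2⟩
      exact ⟨max_le hx1.1.le hx2.1, le_min hx1.2.le hx2.2⟩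
    calc volume (Set.Ioo a b ∩ Set.Icc c d) ≤ volume (Set.Icc (max a c) (min b d)) :=
          measure_mono hsub
      _ = ENNReal.ofReal (min b d - max a c) := Real.volume_Icc
  · have hsub : Set.Ioo (max a c) (min b d) ⊆ Set.Ioo a b ∩ Set.Icc c d := by
      rintro x ⟨hx1, hx2⟩
      refine ⟨⟨(le_max_left a c).trans_lt hx1, hx2.trans_le (min_le_left b d)⟩,
        ⟨((le_max_right a c).trans_lt hx1).le, (hx2.trans_le (min_le_right b d)).le⟩⟩
    calc ENNReal.ofReal (min b d - max a c) = volume (Set.Ioo (max a c) (min b d)) :=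
          Real.volume_Ioo.symm
      _ ≤ volume (Set.Ioo a b ∩ Set.Icc c d) := measure_mono hsub

lemma nnProb_eq (l₁ u₁ l₂ u₂ q : ℝ) (h₁ : l₁ < u₁) (h₂ : l₂ < u₂)
    (hq : l₁ ≤ q) (hq' : q ≤ u₁) :
    nnProb l₁ u₁ l₂ u₂ q
      = ENNReal.ofReal ((∫ y in l₂..u₂, lenf l₁ u₁ q y) / ((u₁ - l₁) * (u₂ - l₂))) := by
  haveI := unif_prob l₁ u₁ h₁
  haveI := unif_prob l₂ u₂ h₂
  have hS : MeasurableSet {xy : ℝ × ℝ | |xy.1 - q| < |xy.2 - q|} := by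
    apply measurableSet_lt <;> fun_prop
  have hslice : ∀ y : ℝ, ((fun x => (x, y)) ⁻¹' {xy : ℝ × ℝ | |xy.1 - q| < |xy.2 - q|})
      = Set.Ioo (q - |y - q|) (q + |y - q|) := by
    intro y
    ext x
    simp only [Set.mem_preimage, Set.mem_setOf_eq, Set.mem_Ioo, abs_lt]
    constructor
    · rintro ⟨h1, h2⟩; constructor <;> linarith
    · rintro ⟨h1, h2⟩; constructor <;> linarith
  have hmeas1 : ∀ y : ℝ, unif l₁ u₁ (Set.Ioo (q - |y - q|) (q + |y - q|))
      = ENNReal.ofReal (lenf l₁ u₁ q y) * (ENNReal.ofReal (u₁ - l₁))⁻¹ := by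
    intro y
    rw [unif, Measure.smul_apply, smul_eq_mul, Measure.restrict_apply measurableSet_Ioo,
      vol_Ioo_inter_Icc, Real.volume_Icc, mul_comm, lenf]
  have hn1 : ENNReal.ofReal (u₁ - l₁) ≠ 0 := by
    simp only [ne_eq, ENNReal.ofReal_eq_zero, not_le]; linarith
  rw [nnProb, Measure.prod_apply_symm hS]
  simp_rw [hslice, hmeas1]
  rw [unif, lintegral_smul_measure,
    lintegral_mul_const' _ _ (ENNReal.inv_ne_top.mpr hn1)]
  have hint : IntegrableOn (lenf l₁ u₁ q) (Set.Icc l₂ u₂) volume :=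
    (lenf_cont l₁ u₁ q).integrableOn_Icc
  have hofReal : ∫⁻ y in Set.Icc l₂ u₂, ENNReal.ofReal (lenf l₁ u₁ q y) ∂volume
      = ENNReal.ofReal (∫ y in Set.Icc l₂ u₂, lenf l₁ u₁ q y ∂volume) :=
    (ofReal_integral_eq_lintegral_ofReal hint
      (Filter.Eventually.of_forall fun y => lenf_nonneg l₁ u₁ q y hq hq')).symm
  rw [hofReal]
  have hIcc : ∫ y in Set.Icc l₂ u₂, lenf l₁ u₁ q y ∂volume = ∫ y in l₂..u₂, lenf l₁ u₁ q y := by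
    rw [MeasureTheory.integral_Icc_eq_integral_Ioc, intervalIntegral.integral_of_le h₂.le]
  rw [hIcc, Real.volume_Icc]
  rw [ENNReal.ofReal_div_of_pos (by nlinarith), ENNReal.ofReal_mul (by linarith)]
  rw [div_eq_mul_inv, ENNReal.mul_inv (Or.inl hn1) (Or.inl ENNReal.ofReal_ne_top)]
  ring

lemma unif_reflect (l u c : ℝ) (h : l + u = c) :
    MeasurePreserving (fun x : ℝ => c - x) (unif l u) (unif l u) := by
  refine ⟨by fun_prop, ?_⟩
  have hpre : (fun x : ℝ => c - x) ⁻¹' Set.Icc l u = Set.Icc l u := by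
    ext x
    simp only [Set.mem_preimage, Set.mem_Icc]
    constructor <;> rintro ⟨a, b⟩ <;> constructor <;> linarith
  rw [unif, Measure.map_smul]
  congr 1
  calc Measure.map (fun x : ℝ => c - x) (volume.restrict (Set.Icc l u))
      = Measure.map (fun x : ℝ => c - x)
          (volume.restrict ((fun x : ℝ => c - x) ⁻¹' Set.Icc l u)) := by rw [hpre]
    _ = (Measure.map (fun x : ℝ => c - x) volume).restrict (Set.Icc l u) :=
        (Measure.restrict_map (by fun_prop) measurableSet_Icc).symm
    _ = volume.restrict (Set.Icc l u) := by rw [Measure.map_sub_left_eq_self volume c]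

lemma nnProb_reflect (l₁ u₁ l₂ u₂ q : ℝ) (h₁ : l₁ < u₁) (h₂ : l₂ < u₂)
    (hmid : l₁ + u₁ = l₂ + u₂) :
    nnProb l₁ u₁ l₂ u₂ (l₁ + u₁ - q) = nnProb l₁ u₁ l₂ u₂ q := by
  haveI := unif_prob l₁ u₁ h₁
  haveI := unif_prob l₂ u₂ h₂
  set c := l₁ + u₁ with hc
  have hmp : MeasurePreserving (Prod.map (fun x : ℝ => c - x) (fun x : ℝ => c - x))
      ((unif l₁ u₁).prod (unif l₂ u₂)) ((unif l₁ u₁).prod (unif l₂ u₂)) :=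
    (unif_reflect l₁ u₁ c rfl).prod (unif_reflect l₂ u₂ c hmid.symm)
  have hS : MeasurableSet {xy : ℝ × ℝ | |xy.1 - q| < |xy.2 - q|} := by
    apply measurableSet_lt <;> fun_prop
  have hpre : (Prod.map (fun x : ℝ => c - x) (fun x : ℝ => c - x)) ⁻¹'
      {xy : ℝ × ℝ | |xy.1 - q| < |xy.2 - q|}
      = {xy : ℝ × ℝ | |xy.1 - (c - q)| < |xy.2 - (c - q)|} := by
    ext xy
    simp only [Set.mem_preimage, Set.mem_setOf_eq, Prod.map_fst, Prod.map_snd]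
    have e1 : c - xy.1 - q = -(xy.1 - (c - q)) := by ring
    have e2 : c - xy.2 - q = -(xy.2 - (c - q)) := by ring
    rw [e1, e2, abs_neg, abs_neg]
  have := hmp.measure_preimage hS.nullMeasurableSet
  rw [hpre] at this
  rw [nnProb, nnProb, this]

lemma integral_linear (a b c d : ℝ) :
    (∫ y in a..b, (c * y + d)) = c * (b^2 - a^2) / 2 + d * (b - a) := by
  rw [intervalIntegral.integral_add ((by fun_prop : Continuous fun y : ℝ => c * y).intervalIntegrable a b)
    (intervalIntegrable_const), intervalIntegral.integral_const_mul, integral_id,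
    intervalIntegral.integral_const]
  simp only [smul_eq_mul]
  ring

lemma lenf_eq1 (l₁ u₁ q y : ℝ) (h1 : 2*q - u₁ ≤ y) (h2 : y ≤ q) (h3 : l₁ ≤ y) :
    lenf l₁ u₁ q y = -2 * y + 2 * q := by
  unfold lenf
  rw [abs_of_nonpos (by linarith), min_eq_left (by linarith), max_eq_left (by linarith)]
  ring

lemma lenf_eq2 (l₁ u₁ q y : ℝ) (h1 : q ≤ y) (h2 : y ≤ u₁) (h3 : y ≤ 2*q - l₁) :
    lenf l₁ u₁ q y = 2 * y + -(2 * q) := by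
  unfold lenf
  rw [abs_of_nonneg (by linarith), min_eq_left (by linarith), max_eq_left (by linarith)]
  ring

lemma lenf_eq3 (l₁ u₁ q y : ℝ) (h1 : q ≤ y) (h2 : y ≤ u₁) (h3 : 2*q - l₁ ≤ y) :
    lenf l₁ u₁ q y = 1 * y + -l₁ := by
  unfold lenf
  rw [abs_of_nonneg (by linarith), min_eq_left (by linarith), max_eq_right (by linarith)]
  ring

lemma J_eq (l₁ u₁ l₂ u₂ : ℝ) (h₁ : l₁ < u₁) (h₂ : l₂ < u₂)
    (hmid : l₁ + u₁ = l₂ + u₂) (hl : l₁ < l₂) (hu : u₂ < u₁) :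
    (∫ y in l₂..u₂, lenf l₁ u₁ ((l₁ + l₂)/2) y) = (u₁ - l₁) * (u₂ - l₂) / 2 := by
  set q : ℝ := (l₁ + l₂)/2 with hq
  have h : ∫ y in l₂..u₂, lenf l₁ u₁ q y = ∫ y in l₂..u₂, (1 * y + -l₁) := by
    apply intervalIntegral.integral_congr
    intro y hy
    rw [Set.uIcc_of_le h₂.le] at hy
    exact lenf_eq3 l₁ u₁ q y (by simp only [hq]; linarith [hy.1])
      (by linarith [hy.2]) (by simp only [hq]; linarith [hy.1])
  rw [h, integral_linear]
  linear_combination (-(u₂ - l₂)/2) * hmid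

lemma J_lt (l₁ u₁ l₂ u₂ q : ℝ) (h₁ : l₁ < u₁) (h₂ : l₂ < u₂)
    (hmid : l₁ + u₁ = l₂ + u₂) (hl : l₁ < l₂) (hu : u₂ < u₁)
    (hq₁ : (l₁ + l₂)/2 < q) (hq₂ : q ≤ (l₁ + u₁)/2) :
    (∫ y in l₂..u₂, lenf l₁ u₁ q y) < (u₁ - l₁) * (u₂ - l₂) / 2 := by
  have hInt : ∀ a b : ℝ, IntervalIntegrable (lenf l₁ u₁ q) volume a b :=
    fun a b => (lenf_cont l₁ u₁ q).intervalIntegrable a b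
  have hql : l₁ < q := by linarith
  have hqu : q < u₂ := by linarith
  rcases le_or_gt q l₂ with hA | hB
  · -- q ≤ l₂
    rcases le_or_gt u₂ (2*q - l₁) with hA1 | hA2
    · -- A1 : no clip, lenf = 2(y-q) throughout
      have h : ∫ y in l₂..u₂, lenf l₁ u₁ q y = ∫ y in l₂..u₂, (2 * y + -(2*q)) := by
        apply intervalIntegral.integral_congr
        intro y hy
        rw [Set.uIcc_of_le h₂.le] at hy
        exact lenf_eq2 l₁ u₁ q y (by linarith [hy.1]) (by linarith [hy.2]) (by linarith [hy.2])
      rw [h, integral_linear]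
      nlinarith [mul_pos (show (0:ℝ) < u₂ - l₂ by linarith)
        (show (0:ℝ) < (u₁ - l₁)/2 - (u₂ + l₂ - 2*q) by linarith)]
    · -- A2 : split at s = 2q - l₁
      set s : ℝ := 2*q - l₁ with hs
      have hls : l₂ < s := by simp only [hs]; linarith
      have hsplit : (∫ y in l₂..s, lenf l₁ u₁ q y) + (∫ y in s..u₂, lenf l₁ u₁ q y)
          = ∫ y in l₂..u₂, lenf l₁ u₁ q y :=
        intervalIntegral.integral_add_adjacent_intervals (hInt _ _) (hInt _ _)
      have e1 : ∫ y in l₂..s, lenf l₁ u₁ q y = ∫ y in l₂..s, (2 * y + -(2*q)) := by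
        apply intervalIntegral.integral_congr
        intro y hy
        rw [Set.uIcc_of_le hls.le] at hy
        exact lenf_eq2 l₁ u₁ q y (by linarith [hy.1]) (by simp only [hs] at hy; linarith [hy.2])
          (by linarith [hy.2])
      have e2 : ∫ y in s..u₂, lenf l₁ u₁ q y = ∫ y in s..u₂, (1 * y + -l₁) := by
        apply intervalIntegral.integral_congr
        intro y hy
        rw [Set.uIcc_of_le hA2.le] at hy
        exact lenf_eq3 l₁ u₁ q y (by simp only [hs] at hy; linarith [hy.1])
          (by linarith [hy.2]) (by linarith [hy.1])
      rw [← hsplit, e1, e2, integral_linear, integral_linear]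
      have hx : (0:ℝ) < q - (l₁ + l₂)/2 := by linarith
      nlinarith [mul_pos hx hx]
  · -- l₂ < q
    rcases le_or_gt u₂ (2*q - l₁) with hB1 | hB2
    · -- B1 : split at q
      have hsplit : (∫ y in l₂..q, lenf l₁ u₁ q y) + (∫ y in q..u₂, lenf l₁ u₁ q y)
          = ∫ y in l₂..u₂, lenf l₁ u₁ q y :=
        intervalIntegral.integral_add_adjacent_intervals (hInt _ _) (hInt _ _)
      have e1 : ∫ y in l₂..q, lenf l₁ u₁ q y = ∫ y in l₂..q, (-2 * y + 2*q) := by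
        apply intervalIntegral.integral_congr
        intro y hy
        rw [Set.uIcc_of_le hB.le] at hy
        exact lenf_eq1 l₁ u₁ q y (by linarith [hy.1]) (hy.2) (by linarith [hy.1])
      have e2 : ∫ y in q..u₂, lenf l₁ u₁ q y = ∫ y in q..u₂, (2 * y + -(2*q)) := by
        apply intervalIntegral.integral_congr
        intro y hy
        rw [Set.uIcc_of_le hqu.le] at hy
        exact lenf_eq2 l₁ u₁ q y (hy.1) (by linarith [hy.2]) (by linarith [hy.2])
      rw [← hsplit, e1, e2, integral_linear, integral_linear]
      have hd0 : (0:ℝ) ≤ (l₂ + u₂)/2 - q := by linarith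
      have hd1 : (l₂ + u₂)/2 - q ≤ (u₂ - l₂)/2 := by linarith
      have hd2 : (l₂ + u₂)/2 - q ≤ (u₁ - u₂)/2 := by linarith
      nlinarith [mul_nonneg hd0 hd0, mul_nonneg (sub_nonneg.2 hd1) (sub_nonneg.2 hd2),
        mul_pos (show (0:ℝ) < u₂ - l₂ by linarith) (show (0:ℝ) < u₁ - u₂ by linarith),
        mul_nonneg hd0 (show (0:ℝ) ≤ (u₁ - u₂)/2 - ((l₂ + u₂)/2 - q) by linarith)]
    · -- B2 : split at q and s
      set s : ℝ := 2*q - l₁ with hs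
      have hqs : q < s := by simp only [hs]; linarith
      have hsplit2 : (∫ y in q..s, lenf l₁ u₁ q y) + (∫ y in s..u₂, lenf l₁ u₁ q y)
          = ∫ y in q..u₂, lenf l₁ u₁ q y :=
        intervalIntegral.integral_add_adjacent_intervals (hInt _ _) (hInt _ _)
      have hsplit : (∫ y in l₂..q, lenf l₁ u₁ q y) + (∫ y in q..u₂, lenf l₁ u₁ q y)
          = ∫ y in l₂..u₂, lenf l₁ u₁ q y :=
        intervalIntegral.integral_add_adjacent_intervals (hInt _ _) (hInt _ _)
      have e1 : ∫ y in l₂..q, lenf l₁ u₁ q y = ∫ y in l₂..q, (-2 * y + 2*q) := by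
        apply intervalIntegral.integral_congr
        intro y hy
        rw [Set.uIcc_of_le hB.le] at hy
        exact lenf_eq1 l₁ u₁ q y (by linarith [hy.1]) (hy.2) (by linarith [hy.1])
      have e2 : ∫ y in q..s, lenf l₁ u₁ q y = ∫ y in q..s, (2 * y + -(2*q)) := by
        apply intervalIntegral.integral_congr
        intro y hy
        rw [Set.uIcc_of_le hqs.le] at hy
        exact lenf_eq2 l₁ u₁ q y (hy.1) (by simp only [hs] at hy; linarith [hy.2])
          (by linarith [hy.2])
      have e3 : ∫ y in s..u₂, lenf l₁ u₁ q y = ∫ y in s..u₂, (1 * y + -l₁) := by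
        apply intervalIntegral.integral_congr
        intro y hy
        rw [Set.uIcc_of_le hB2.le] at hy
        exact lenf_eq3 l₁ u₁ q y (by simp only [hs] at hy; linarith [hy.1])
          (by linarith [hy.2]) (by linarith [hy.1])
      rw [← hsplit, ← hsplit2, e1, e2, e3, integral_linear, integral_linear, integral_linear]
      nlinarith [mul_pos (show (0:ℝ) < l₂ - l₁ by linarith)
        (show (0:ℝ) < q - l₂ by linarith)]

lemma half_ofReal : ENNReal.ofReal (1/2 : ℝ) = 1/2 := by
  rw [ENNReal.ofReal_div_of_pos (by norm_num), ENNReal.ofReal_one, ENNReal.ofReal_ofNat]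

lemma nnProb_lt_half (l₁ u₁ l₂ u₂ q : ℝ) (h₁ : l₁ < u₁) (h₂ : l₂ < u₂)
    (hmid : l₁ + u₁ = l₂ + u₂) (hl : l₁ < l₂) (hu : u₂ < u₁)
    (hq₁ : (l₁ + l₂)/2 < q) (hq₂ : q ≤ (l₁ + u₁)/2) :
    nnProb l₁ u₁ l₂ u₂ q < 1/2 := by
  rw [nnProb_eq l₁ u₁ l₂ u₂ q h₁ h₂ (by linarith) (by linarith), ← half_ofReal]
  rw [ENNReal.ofReal_lt_ofReal_iff (by norm_num)]
  have hD : (0:ℝ) < (u₁ - l₁) * (u₂ - l₂) := by nlinarith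
  rw [div_lt_iff₀ hD]
  linarith [J_lt l₁ u₁ l₂ u₂ q h₁ h₂ hmid hl hu hq₁ hq₂]


theorem prob_bisector_common_midpoint (l₁ u₁ l₂ u₂ x₁ x₂ : ℝ)
    (h₁ : l₁ < u₁) (h₂ : l₂ < u₂)
    (hmid : (l₁ + u₁) / 2 = (l₂ + u₂) / 2)
    (hl : l₁ < l₂) (hu : u₂ < u₁)
    (hx₁ : x₁ = (l₁ + l₂) / 2) (hx₂ : x₂ = (u₁ + u₂) / 2) :
    nnProb l₁ u₁ l₂ u₂ x₁ = 1 / 2 ∧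
    nnProb l₁ u₁ l₂ u₂ x₂ = 1 / 2 ∧
    (∀ q : ℝ, x₁ < q → q < x₂ → nnProb l₁ u₁ l₂ u₂ q < 1 / 2) := by
  have hmid' : l₁ + u₁ = l₂ + u₂ := by linarith
  have hfirst : nnProb l₁ u₁ l₂ u₂ x₁ = 1 / 2 := by
    rw [hx₁, nnProb_eq l₁ u₁ l₂ u₂ _ h₁ h₂ (by linarith) (by linarith),
      J_eq l₁ u₁ l₂ u₂ h₁ h₂ hmid' hl hu, ← half_ofReal]
    congr 1
    have hD : ((u₁ - l₁) * (u₂ - l₂)) ≠ 0 := ne_of_gt (by nlinarith)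
    rw [div_right_comm, div_self hD]
  refine ⟨hfirst, ?_, ?_⟩
  · have hrefl := nnProb_reflect l₁ u₁ l₂ u₂ x₁ h₁ h₂ hmid'
    have hx : l₁ + u₁ - x₁ = x₂ := by rw [hx₁, hx₂]; linarith
    rw [hx] at hrefl
    rw [hrefl, hfirst]
  · intro q hq1 hq2
    rcases le_or_gt q ((l₁ + u₁)/2) with hc | hc
    · exact nnProb_lt_half l₁ u₁ l₂ u₂ q h₁ h₂ hmid' hl hu (by rw [hx₁] at hq1; exact hq1) hc
    · have hrefl := nnProb_reflect l₁ u₁ l₂ u₂ (l₁ + u₁ - q) h₁ h₂ hmid'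
      have hx : l₁ + u₁ - (l₁ + u₁ - q) = q := by ring
      rw [hx] at hrefl
      rw [hrefl]
      exact nnProb_lt_half l₁ u₁ l₂ u₂ (l₁ + u₁ - q) h₁ h₂ hmid' hl hu
        (by rw [hx₂] at hq2; linarith) (by linarith)
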